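/- (Axiom BN2 for GL_n) Let k be a field, n ≥ 2, let σ_i ∈ S_n be the adjacent transposition (i, i+1) for some 1 ≤ i ≤ n−1, and let π ∈ S_n be any permutation. Then the product of double cosets in GL_n(k) satisfies (B a_{σ_i} B) · (B a_π B) ⊆ (B a_π B) ∪ (B a_{σ_i π} B), where the product of two double cosets is the set of all products of an element of the first with an element of the second. -/

import Mathlib

/-- The set `B` of invertible upper triangular `n × n` matrices over `k`. -/
def upperTriangularUnits (k : Type*) [Field k] (n : ℕ) : Set (Matrix (Fin n) (Fin n) k) :=
  {b | IsUnit b.det ∧ ∀ i j : Fin n, j < i → b i j = 0}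

/-- The permutation matrix `a_π`, with `(a_π)_{ij} = 1` iff `i = π j`. -/
def permMat (k : Type*) [Field k] {n : ℕ} (π : Equiv.Perm (Fin n)) :
    Matrix (Fin n) (Fin n) k :=
  Matrix.of fun i j => if i = π j then 1 else 0

namespace BN2aux

variable {k : Type*} [Field k] {n : ℕ}

theorem utu_mul {b c : Matrix (Fin n) (Fin n) k}
    (hb : b ∈ upperTriangularUnits k n) (hc : c ∈ upperTriangularUnits k n) :
    b * c ∈ upperTriangularUnits k n := by
  refine ⟨by rw [Matrix.det_mul]; exact hb.1.mul hc.1, fun a b' hlt => ?_⟩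
  rw [Matrix.mul_apply]
  refine Finset.sum_eq_zero fun l _ => ?_
  rcases le_or_gt l b' with h | h
  · rw [hb.2 a l (lt_of_le_of_lt h hlt), zero_mul]
  · rw [hc.2 l b' h, mul_zero]

theorem utu_of (M : Matrix (Fin n) (Fin n) k) (h : ∀ a b : Fin n, b < a → M a b = 0)
    (hd : ∀ a, M a a ≠ 0) : M ∈ upperTriangularUnits k n := by
  refine ⟨?_, h⟩
  rw [Matrix.det_of_upperTriangular (fun a b hab => h a b hab)]
  rw [isUnit_iff_ne_zero]
  exact Finset.prod_ne_zero_iff.mpr fun a _ => hd a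

theorem utu_diag_ne_zero {M : Matrix (Fin n) (Fin n) k}
    (hM : M ∈ upperTriangularUnits k n) (a : Fin n) : M a a ≠ 0 := by
  have h := hM.1
  rw [Matrix.det_of_upperTriangular (fun x y hxy => hM.2 x y hxy), isUnit_iff_ne_zero] at h
  exact Finset.prod_ne_zero_iff.mp h a (Finset.mem_univ a)

theorem one_mem_utu : (1 : Matrix (Fin n) (Fin n) k) ∈ upperTriangularUnits k n :=
  utu_of 1 (fun a b h => Matrix.one_apply_ne (ne_of_gt h)) (fun a => by simp)

theorem permMat_mul_permMat (σ π : Equiv.Perm (Fin n)) :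
    permMat k σ * permMat k π = permMat k (σ * π) := by
  ext a b
  rw [Matrix.mul_apply]
  simp only [permMat, Matrix.of_apply, ite_mul, one_mul, zero_mul]
  rw [Finset.sum_eq_single (π b)]
  · simp [Equiv.Perm.mul_apply]; congr
  · intro x _ hx
    simp [hx]
  · simp

theorem permMat_one : permMat k (1 : Equiv.Perm (Fin n)) = 1 := by
  ext a b
  simp [permMat, Matrix.one_apply, eq_comm]; congr

theorem permMat_mul_apply (π : Equiv.Perm (Fin n)) (M : Matrix (Fin n) (Fin n) k) (a b : Fin n) :
    (permMat k π * M) a b = M (π⁻¹ a) b := by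
  rw [Matrix.mul_apply]
  simp only [permMat, Matrix.of_apply, ite_mul, one_mul, zero_mul]
  rw [Finset.sum_eq_single (π⁻¹ a)]
  · simp
  · intro x _ hx
    have hax : a ≠ π x := fun hc => hx (by simp [hc])
    simp [hax]
  · simp

theorem mul_permMat_apply (π : Equiv.Perm (Fin n)) (M : Matrix (Fin n) (Fin n) k) (a b : Fin n) :
    (M * permMat k π) a b = M a (π b) := by
  rw [Matrix.mul_apply]
  simp only [permMat, Matrix.of_apply, mul_ite, mul_one, mul_zero]
  rw [Finset.sum_eq_single (π b)]
  · simp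
  · intro x _ hx
    simp [hx]
  · simp

theorem isUnit_det_permMat (π : Equiv.Perm (Fin n)) : IsUnit (permMat k π).det := by
  have : permMat k π * permMat k π⁻¹ = 1 := by
    rw [permMat_mul_permMat, mul_inv_cancel, permMat_one]
  have hdet : (permMat k π).det * (permMat k π⁻¹).det = 1 := by
    rw [← Matrix.det_mul, this, Matrix.det_one]
  exact IsUnit.of_mul_eq_one _ hdet

/-- `(1 + t E_{a b}) ∈ B` for `a < b`. -/
theorem unipotent_mem {a b : Fin n} (hab : a < b) (t : k) :
    (1 + Matrix.single a b t) ∈ upperTriangularUnits k n := by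
  refine utu_of _ (fun x y hyx => ?_) (fun x => ?_)
  · rw [Matrix.add_apply, Matrix.one_apply_ne (ne_of_gt hyx),
      Matrix.single_apply_of_ne _ _ _ _ _ ?_, add_zero]
    rintro ⟨rfl, rfl⟩
    exact absurd hab (not_lt.mpr hyx.le)
  · rw [Matrix.add_apply, Matrix.one_apply_eq,
      Matrix.single_apply_of_ne _ _ _ _ _ ?_]
    · simp
    rintro ⟨rfl, rfl⟩
    exact lt_irrefl _ hab

/-- commuting a unipotent past a permutation matrix. -/
theorem unip_mul_permMat (π : Equiv.Perm (Fin n)) (a b : Fin n) (t : k) :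
    (1 + Matrix.single a b t) * permMat k π
      = permMat k π * (1 + Matrix.single (π⁻¹ a) (π⁻¹ b) t) := by
  ext x y
  rw [mul_permMat_apply, permMat_mul_apply]
  simp only [Matrix.add_apply, Matrix.one_apply]
  congr 1
  · simp [Equiv.eq_symm_apply, Equiv.Perm.inv_def, eq_comm]
  · by_cases h1 : a = x
    · subst h1
      by_cases h2 : b = π y
      · simp [h2, Equiv.Perm.inv_def]
      · rw [Matrix.single_apply_of_ne _ _ _ _ _ (by tauto),
          Matrix.single_apply_of_ne]
        rintro ⟨-, h3⟩
        exact h2 (by simpa [Equiv.Perm.inv_def, Equiv.symm_apply_eq] using h3)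
    · rw [Matrix.single_apply_of_ne _ _ _ _ _ (by tauto),
        Matrix.single_apply_of_ne]
      rintro ⟨h3, -⟩
      exact h1 (by simpa [Equiv.Perm.inv_def, Equiv.eq_symm_apply, eq_comm] using h3)

end BN2aux

open BN2aux

/-- The double coset `B a_π B` in `GL_n(k)`. -/
def doubleCoset (k : Type*) [Field k] {n : ℕ} (π : Equiv.Perm (Fin n)) :
    Set (Matrix (Fin n) (Fin n) k) :=
  {x | ∃ b ∈ upperTriangularUnits k n, ∃ b' ∈ upperTriangularUnits k n,
    x = b * permMat k π * b'}

/-- (Axiom BN2 for `GL_n`) If `σ = (i, i+1)` is an adjacent transposition and `π ∈ S_n`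
is any permutation, then `(B a_σ B) · (B a_π B) ⊆ (B a_π B) ∪ (B a_{σπ} B)`. -/
theorem stmt_6 (k : Type*) [Field k] (n : ℕ) (hn : 2 ≤ n)
    (i : Fin n) (hi : (i : ℕ) + 1 < n) (π : Equiv.Perm (Fin n)) :
    ∀ x ∈ doubleCoset k (Equiv.swap i ⟨(i : ℕ) + 1, hi⟩),
      ∀ y ∈ doubleCoset k π,
        x * y ∈ doubleCoset k π ∪ doubleCoset k (Equiv.swap i ⟨(i : ℕ) + 1, hi⟩ * π) := by
  intro x hx y hy
  obtain ⟨b, hb, b', hb', rfl⟩ := hx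
  obtain ⟨c, hc, c', hc', rfl⟩ := hy
  set i' : Fin n := ⟨(i : ℕ) + 1, hi⟩ with hi'def
  set σ : Equiv.Perm (Fin n) := Equiv.swap i i' with hσ
  have hI : (i' : ℕ) = (i : ℕ) + 1 := rfl
  have hii' : i < i' := by rw [Fin.lt_def]; exact Nat.lt_succ_self _
  have hne : i ≠ i' := ne_of_lt hii'
  have hdmem : b' * c ∈ upperTriangularUnits k n := utu_mul hb' hc
  set d := b' * c with hdd
  have hdii : d i i ≠ 0 := utu_diag_ne_zero hdmem i
  set t : k := d i i' / d i i with ht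
  set u := (1 : Matrix (Fin n) (Fin n) k) + Matrix.single i i' t with hu
  set d₁ := d * ((1 : Matrix (Fin n) (Fin n) k) + Matrix.single i i' (-t)) with hd₁
  have hinv : ((1 : Matrix (Fin n) (Fin n) k) + Matrix.single i i' (-t)) * u = 1 := by
    rw [hu, add_mul, one_mul, mul_add, mul_one,
      Matrix.single_mul_single_of_ne _ _ _ _ hne.symm, add_zero, add_assoc,
      ← Matrix.single_add, add_neg_cancel, Matrix.single_zero, add_zero]
  have hd1u : d₁ * u = d := by rw [hd₁, mul_assoc, hinv, mul_one]
  have hd₁mem : d₁ ∈ upperTriangularUnits k n := utu_mul hdmem (unipotent_mem hii' (-t))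
  have hd₁ii' : d₁ i i' = 0 := by
    rw [hd₁, mul_add, mul_one, Matrix.add_apply,
      Matrix.mul_single_apply_same]
    rw [ht]
    field_simp
    ring
  set e := permMat k σ * d₁ * permMat k σ with he
  have hσσ : permMat k σ * permMat k σ = 1 := by
    rw [permMat_mul_permMat, hσ, Equiv.swap_mul_self, permMat_one]
  have hσinv : σ⁻¹ = σ := by rw [hσ, Equiv.swap_inv]
  have heapp : ∀ x y, e x y = d₁ (σ x) (σ y) := by
    intro x y
    rw [he, mul_permMat_apply, permMat_mul_apply, hσinv]
  have hemem : e ∈ upperTriangularUnits k n := by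
    constructor
    · rw [he, Matrix.det_mul, Matrix.det_mul]
      exact ((isUnit_det_permMat σ).mul hd₁mem.1).mul (isUnit_det_permMat σ)
    · intro a b' hba
      rw [heapp]
      have key : (σ a = i ∧ σ b' = i') ∨ σ b' < σ a := by
        have hba' : (b' : ℕ) < (a : ℕ) := hba
        simp only [hσ, Equiv.swap_apply_def]
        split_ifs <;> (try simp_all [Fin.lt_def, Fin.ext_iff, -Fin.val_fin_lt]) <;> omega
      rcases key with ⟨h1, h2⟩ | hlt
      · rw [h1, h2]; exact hd₁ii'
      · exact hd₁mem.2 _ _ hlt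
  have hePσ : e * permMat k σ = permMat k σ * d₁ := by
    rw [he, mul_assoc, hσσ, mul_one]
  have hπne : π⁻¹ i ≠ π⁻¹ i' := fun h => hne (π⁻¹.injective h)
  set v := (1 : Matrix (Fin n) (Fin n) k) + Matrix.single (π⁻¹ i) (π⁻¹ i') t with hv
  have hEQ : b * permMat k σ * b' * (c * permMat k π * c')
      = b * e * permMat k (σ * π) * (v * c') := by
    have h1 : b * permMat k σ * b' * (c * permMat k π * c')
        = b * (permMat k σ * d * permMat k π) * c' := by
      rw [hdd]; simp only [mul_assoc]
    have h2 : permMat k σ * d * permMat k π = e * permMat k (σ * π) * v := by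
      rw [← hd1u, ← permMat_mul_permMat]
      have h3 : permMat k σ * (d₁ * u) * permMat k π
          = (permMat k σ * d₁) * (u * permMat k π) := by simp only [mul_assoc]
      rw [h3, ← hePσ, unip_mul_permMat π i i' t, ← hv]
      simp only [mul_assoc]
    rw [h1, h2]
    simp only [mul_assoc]
  rcases lt_trichotomy (π⁻¹ i) (π⁻¹ i') with hlt | heq | hgt
  · exact Or.inr ⟨b * e, utu_mul hb hemem, v * c',
      utu_mul (unipotent_mem hlt t) hc', hEQ⟩
  · exact absurd heq hπne
  by_cases ht0 : t = 0
  · have hv1 : v = 1 := by rw [hv, ht0, Matrix.single_zero, add_zero]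
    refine Or.inr ⟨b * e, utu_mul hb hemem, v * c', ?_, hEQ⟩
    rw [hv1, one_mul]; exact hc'
  -- main case: t ≠ 0, π⁻¹ i' < π⁻¹ i
  have hne' : i' ≠ i := hne.symm
  set q := (1 : Matrix (Fin n) (Fin n) k) + Matrix.single i i (-t⁻¹ - 1)
      + Matrix.single i' i' (t - 1) + Matrix.single i i' 1 with hq
  have hqmem : q ∈ upperTriangularUnits k n := by
    refine utu_of _ (fun r s hsr => ?_) (fun r => ?_)
    · have h1 : s ≠ r := ne_of_lt hsr
      rw [hq]
      simp only [Matrix.add_apply]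
      rw [Matrix.one_apply_ne h1.symm,
        Matrix.single_apply_of_ne _ _ _ _ _ (fun h => h1 (h.2.symm.trans h.1)),
        Matrix.single_apply_of_ne _ _ _ _ _ (fun h => h1 (h.2.symm.trans h.1)),
        Matrix.single_apply_of_ne _ _ _ _ _ (by
          intro h
          rw [← h.1, ← h.2] at hsr
          exact asymm hii' hsr)]
      simp
    · rw [hq]
      simp only [Matrix.add_apply, Matrix.one_apply_eq]
      rw [Matrix.single_apply_of_ne i i' 1 r r (fun h => hne (h.1.trans h.2.symm))]
      rcases eq_or_ne r i with hr | hr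
      · rw [hr, Matrix.single_apply_same,
          Matrix.single_apply_of_ne _ _ _ _ _ (fun h => hne' h.1)]
        intro hcon
        exact inv_ne_zero ht0 (by linear_combination -hcon)
      · rcases eq_or_ne r i' with hr' | hr'
        · rw [hr', Matrix.single_apply_same,
            Matrix.single_apply_of_ne _ _ _ _ _ (fun h => hne h.1)]
          intro hcon
          exact ht0 (by linear_combination hcon)
        · rw [Matrix.single_apply_of_ne _ _ _ _ _ (fun h => hr h.1.symm),
            Matrix.single_apply_of_ne _ _ _ _ _ (fun h => hr' h.1.symm)]
          simp
  have hqid : permMat k σ * u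
      = q * ((1 : Matrix (Fin n) (Fin n) k) + Matrix.single i' i t⁻¹) := by
    ext r s
    rw [permMat_mul_apply, hσinv, mul_add, mul_one, Matrix.add_apply]
    rcases eq_or_ne s i with hs | hs
    · rw [hs, Matrix.mul_single_apply_same]
      rcases eq_or_ne r i with hr | hr
      · rw [hr, hσ, Equiv.swap_apply_left, hu, hq]
        simp [Matrix.add_apply, Matrix.one_apply, Matrix.single, Matrix.of_apply, hne, hne']
      · rcases eq_or_ne r i' with hr' | hr'
        · rw [hr', hσ, Equiv.swap_apply_right, hu, hq]
          simp [Matrix.add_apply, Matrix.one_apply, Matrix.single, Matrix.of_apply, hne, hne', mul_inv_cancel₀, ht0]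
        · rw [hσ, Equiv.swap_apply_of_ne_of_ne hr hr', hu, hq]
          simp [Matrix.add_apply, Matrix.one_apply, Matrix.single, Matrix.of_apply, hne, hne', hr, hr',
            Ne.symm hr, Ne.symm hr']
    · rw [Matrix.mul_single_apply_of_ne _ _ _ _ _ hs, add_zero]
      rcases eq_or_ne r i with hr | hr
      · rw [hr, hσ, Equiv.swap_apply_left, hu, hq]
        simp [Matrix.add_apply, Matrix.one_apply, Matrix.single, Matrix.of_apply, hne, hne', hs, Ne.symm hs]
      · rcases eq_or_ne r i' with hr' | hr'
        · rw [hr', hσ, Equiv.swap_apply_right, hu, hq]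
          rcases eq_or_ne s i' with hs' | hs'
          · rw [hs']
            simp [Matrix.add_apply, Matrix.one_apply, Matrix.single, Matrix.of_apply, hne, hne']
          · simp [Matrix.add_apply, Matrix.one_apply, Matrix.single, Matrix.of_apply, hne, hne', hs, hs',
              Ne.symm hs, Ne.symm hs']
        · rw [hσ, Equiv.swap_apply_of_ne_of_ne hr hr', hu, hq]
          simp [Matrix.add_apply, Matrix.one_apply, Matrix.single, Matrix.of_apply, hs, hr, hr', Ne.symm hs,
            Ne.symm hr, Ne.symm hr', hne, hne']
  set w := (1 : Matrix (Fin n) (Fin n) k) + Matrix.single (π⁻¹ i') (π⁻¹ i) t⁻¹ with hwv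
  have hw : ((1 : Matrix (Fin n) (Fin n) k) + Matrix.single i' i t⁻¹) * permMat k π
      = permMat k π * w := by
    rw [hwv]; exact unip_mul_permMat π i' i t⁻¹
  have hEQ2 : b * permMat k σ * b' * (c * permMat k π * c')
      = b * (e * q) * permMat k π * (w * c') := by
    have h1 : b * permMat k σ * b' * (c * permMat k π * c')
        = b * (permMat k σ * d * permMat k π) * c' := by
      rw [hdd]; simp only [mul_assoc]
    have h2 : permMat k σ * d * permMat k π = (e * q) * permMat k π * w := by
      rw [← hd1u]
      have h3 : permMat k σ * (d₁ * u) * permMat k π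
          = (permMat k σ * d₁) * (u * permMat k π) := by simp only [mul_assoc]
      rw [h3, ← hePσ]
      have h4 : e * permMat k σ * (u * permMat k π)
          = e * (permMat k σ * u) * permMat k π := by simp only [mul_assoc]
      rw [h4, hqid]
      simp only [mul_assoc]
      rw [hw]
    rw [h1, h2]
    simp only [mul_assoc]
  exact Or.inl ⟨b * (e * q), utu_mul hb (utu_mul hemem hqmem), w * c',
    utu_mul (unipotent_mem hgt t⁻¹) hc', hEQ2⟩
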